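/- Fix δ, η ∈ (0,1), a constant C' > 0 and L ≥ 1, and let ε_var(k,n) := k/(n·log(1 + k/√n)). Let 1 ≤ k* < n/2 and suppose: (i) σ̃ : ℝⁿ → (0,∞) is Borel measurable and for all θ ∈ ℝ, all γ with ‖γ‖₀ ≤ k* and all σ > 0, P_{θ,γ,σ}{ L^{−1} ≤ σ̃(X)²/σ² ≤ L } ≥ 1 − η; (ii) {σ̂²_k}_{1 ≤ k < n/2} are Borel measurable estimators such that for all θ ∈ ℝ, all γ with ‖γ‖₀ ≤ k* and all σ > 0, P_{θ,γ,σ}{ there exists k with k* ≤ k < n/2 and |σ̂²_k(X) − σ²|/σ² > C'·ε_var(k,n) } ≤ δ. For each 1 ≤ k < n/2 define (as a function of the data) J_k = [σ̂²_k − σ̃²·C'·L·ε_var(k,n), σ̂²_k + σ̃²·C'·L·ε_var(k,n)], and let σ̂² be any measurable function such that, for each data vector, σ̂² ∈ ⋂_{k ≥ k'} J_k where k' is the smallest integer in [1, n/2) making this intersection nonempty (and σ̂² = 1 if no such k' exists). Then sup over θ ∈ ℝ, γ with ‖γ‖₀ ≤ k* and σ > 0 of P_{θ,γ,σ}{ |σ̂²(X)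 − σ²|/σ² > 2·C'·L²·ε_var(k*,n) } ≤ η + δ. -/
import Mathlib


open MeasureTheory ProbabilityTheory

/-- The law on ℝⁿ of independent coordinates `X j ~ N(θ + γ j, σ²)`. -/
noncomputable def gaussianVec (n : ℕ) (θ : ℝ) (γ : Fin n → ℝ) (σ : ℝ) :
    Measure (Fin n → ℝ) :=
  Measure.pi fun j => gaussianReal (θ + γ j) (Real.toNNReal (σ ^ 2))

/-- `‖γ‖₀`, the number of nonzero coordinates. -/
noncomputable def sparsity {n : ℕ} (γ : Fin n → ℝ) : ℕ :=
  (Function.support γ).ncard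

/-- The minimax variance rate `ε_var(k, n) = k/(n·log(1 + k/√n))`. -/
noncomputable def epsVar (n k : ℕ) : ℝ :=
  (k : ℝ) / ((n : ℝ) * Real.log (1 + (k : ℝ) / Real.sqrt n))

/-- Membership in the grid `{k : 1 ≤ k < n/2}`. -/
def inKvar (n k : ℕ) : Prop :=
  1 ≤ k ∧ (k : ℝ) < (n : ℝ) / 2

/-- Lepski intersection `⋂_{k ≥ k', 1 ≤ k < n/2} J_k` where
`J_k = [σ̂²_k − σ̃² C' L ε_var(k,n), σ̂²_k + σ̃² C' L ε_var(k,n)]`. -/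
noncomputable def lepskiInterVar (n : ℕ) (C' L : ℝ) (σt : (Fin n → ℝ) → ℝ)
    (σksq : ℕ → (Fin n → ℝ) → ℝ) (k' : ℕ) (x : Fin n → ℝ) : Set ℝ :=
  ⋂ k ∈ {k : ℕ | inKvar n k ∧ k' ≤ k},
    Set.Icc (σksq k x - (σt x) ^ 2 * C' * L * epsVar n k)
            (σksq k x + (σt x) ^ 2 * C' * L * epsVar n k)


lemma epsVar_pos' {n k : ℕ} (h : inKvar n k) : 0 < epsVar n k := by
  obtain ⟨h1, h2⟩ := h
  have hk : (0:ℝ) < (k:ℝ) := by exact_mod_cast h1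
  have hn : (0:ℝ) < (n:ℝ) := by nlinarith
  have hs : (0:ℝ) < Real.sqrt n := Real.sqrt_pos.2 hn
  have hlog : 0 < Real.log (1 + (k:ℝ) / Real.sqrt n) := by
    apply Real.log_pos
    have := div_pos hk hs
    linarith
  exact div_pos hk (mul_pos hn hlog)

/-- Theorem (Lepski adaptation to the sparsity level for variance estimation). -/
theorem statement8 (δ η C' L : ℝ)
    (hδ : δ ∈ Set.Ioo (0 : ℝ) 1) (hη : η ∈ Set.Ioo (0 : ℝ) 1)
    (hC' : 0 < C') (hL : 1 ≤ L)
    (n kstar : ℕ) (hkstar : inKvar n kstar)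
    (σt : (Fin n → ℝ) → ℝ) (hσt : Measurable σt)
    (hpilot : ∀ (θ : ℝ) (γ : Fin n → ℝ), sparsity γ ≤ kstar → ∀ σ : ℝ, 0 < σ →
      ENNReal.ofReal (1 - η) ≤ gaussianVec n θ γ σ
        {x | L⁻¹ ≤ (σt x) ^ 2 / σ ^ 2 ∧ (σt x) ^ 2 / σ ^ 2 ≤ L})
    (σksq : ℕ → (Fin n → ℝ) → ℝ) (hσkmeas : ∀ k, Measurable (σksq k))
    (hσkrisk : ∀ (θ : ℝ) (γ : Fin n → ℝ), sparsity γ ≤ kstar → ∀ σ : ℝ, 0 < σ →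
      gaussianVec n θ γ σ
        {x | ∃ k : ℕ, inKvar n k ∧ kstar ≤ k ∧
          C' * epsVar n k < |σksq k x - σ ^ 2| / σ ^ 2}
        ≤ ENNReal.ofReal δ)
    (σhatsq : (Fin n → ℝ) → ℝ) (hσhat : Measurable σhatsq)
    (hsel : ∀ x : Fin n → ℝ,
      (∃ k', inKvar n k' ∧ (lepskiInterVar n C' L σt σksq k' x).Nonempty) →
        ∃ k', inKvar n k' ∧ (lepskiInterVar n C' L σt σksq k' x).Nonempty ∧
          (∀ k'', inKvar n k'' → (lepskiInterVar n C' L σt σksq k'' x).Nonempty → k' ≤ k'') ∧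
          σhatsq x ∈ lepskiInterVar n C' L σt σksq k' x)
    (hsel0 : ∀ x : Fin n → ℝ,
      (¬ ∃ k', inKvar n k' ∧ (lepskiInterVar n C' L σt σksq k' x).Nonempty) → σhatsq x = 1) :
    ∀ (θ : ℝ) (γ : Fin n → ℝ), sparsity γ ≤ kstar → ∀ σ : ℝ, 0 < σ →
      gaussianVec n θ γ σ
        {x | 2 * C' * L ^ 2 * epsVar n kstar < |σhatsq x - σ ^ 2| / σ ^ 2}
        ≤ ENNReal.ofReal (η + δ) := by
  intro θ γ hγ σ hσ
  set μ := gaussianVec n θ γ σ with hμ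
  haveI : IsProbabilityMeasure μ := by
    rw [hμ]; unfold gaussianVec; infer_instance
  have hσ2 : (0:ℝ) < σ ^ 2 := by positivity
  have hL0 : (0:ℝ) < L := lt_of_lt_of_le one_pos hL
  set A : Set (Fin n → ℝ) :=
    {x | L⁻¹ ≤ (σt x) ^ 2 / σ ^ 2 ∧ (σt x) ^ 2 / σ ^ 2 ≤ L} with hA
  set B : Set (Fin n → ℝ) :=
    {x | ∃ k : ℕ, inKvar n k ∧ kstar ≤ k ∧
      C' * epsVar n k < |σksq k x - σ ^ 2| / σ ^ 2} with hB
  have hfm : Measurable fun x => (σt x) ^ 2 / σ ^ 2 := (hσt.pow_const 2).div_const _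
  have hAm : MeasurableSet A := by
    rw [hA]
    exact (measurableSet_le measurable_const hfm).inter (measurableSet_le hfm measurable_const)
  have hεs : 0 < epsVar n kstar := epsVar_pos' hkstar
  -- inclusion
  have key : {x | 2 * C' * L ^ 2 * epsVar n kstar < |σhatsq x - σ ^ 2| / σ ^ 2} ⊆ Aᶜ ∪ B := by
    intro x hx
    by_contra hcon
    rw [Set.mem_union, Set.mem_compl_iff, not_or] at hcon
    push_neg at hcon
    obtain ⟨hxA, hxB⟩ := hcon
    obtain ⟨hA1, hA2⟩ : L⁻¹ ≤ (σt x) ^ 2 / σ ^ 2 ∧ (σt x) ^ 2 / σ ^ 2 ≤ L := hxA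
    have hnotB : ∀ k : ℕ, inKvar n k → kstar ≤ k →
        |σksq k x - σ ^ 2| / σ ^ 2 ≤ C' * epsVar n k := by
      intro k hk hkk
      by_contra hh
      push_neg at hh
      exact hxB ⟨k, hk, hkk, hh⟩
    have hs1 : σ ^ 2 ≤ L * (σt x) ^ 2 := by
      have h := (le_div_iff₀ hσ2).mp hA1
      have hinv : L * L⁻¹ = 1 := mul_inv_cancel₀ hL0.ne'
      nlinarith [mul_le_mul_of_nonneg_left h hL0.le]
    have hs2 : (σt x) ^ 2 ≤ L * σ ^ 2 := by
      rw [div_le_iff₀ hσ2] at hA2; linarith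
    have hmem : σ ^ 2 ∈ lepskiInterVar n C' L σt σksq kstar x := by
      unfold lepskiInterVar
      simp only [Set.mem_iInter, Set.mem_setOf_eq]
      rintro k ⟨hk, hkk⟩
      have hε := epsVar_pos' hk
      have h1 := hnotB k hk hkk
      rw [div_le_iff₀ hσ2] at h1
      have h2 : |σksq k x - σ ^ 2| ≤ (σt x) ^ 2 * C' * L * epsVar n k := by
        have h3 := mul_le_mul_of_nonneg_left hs1 (mul_pos hC' hε).le
        nlinarith [h3]
      rw [abs_le] at h2
      constructor <;> linarith [h2.1, h2.2]
    obtain ⟨k', hk', hne', hmin, hxmem⟩ :=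
      hsel x ⟨kstar, hkstar, ⟨σ ^ 2, hmem⟩⟩
    have hk'le : k' ≤ kstar := hmin kstar hkstar ⟨σ ^ 2, hmem⟩
    have hhat : σhatsq x ∈ Set.Icc
        (σksq kstar x - (σt x) ^ 2 * C' * L * epsVar n kstar)
        (σksq kstar x + (σt x) ^ 2 * C' * L * epsVar n kstar) := by
      have := hxmem
      unfold lepskiInterVar at this
      simp only [Set.mem_iInter, Set.mem_setOf_eq] at this
      exact this kstar ⟨hkstar, hk'le⟩
    have hsig : σ ^ 2 ∈ Set.Icc
        (σksq kstar x - (σt x) ^ 2 * C' * L * epsVar n kstar)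
        (σksq kstar x + (σt x) ^ 2 * C' * L * epsVar n kstar) := by
      have := hmem
      unfold lepskiInterVar at this
      simp only [Set.mem_iInter, Set.mem_setOf_eq] at this
      exact this kstar ⟨hkstar, le_refl _⟩
    have hd : |σhatsq x - σ ^ 2| ≤ 2 * ((σt x) ^ 2 * C' * L * epsVar n kstar) := by
      rw [abs_le]
      constructor <;> [linarith [hhat.1, hsig.2]; linarith [hhat.2, hsig.1]]
    have hx' : 2 * C' * L ^ 2 * epsVar n kstar * σ ^ 2 < |σhatsq x - σ ^ 2| := by
      rw [Set.mem_setOf_eq, lt_div_iff₀ hσ2] at hx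
      exact hx
    have h4 := mul_le_mul_of_nonneg_left hs2
      (mul_nonneg (mul_nonneg (by linarith : (0:ℝ) ≤ 2 * C') hL0.le) hεs.le)
    nlinarith [hd, hx', h4]
  calc μ {x | 2 * C' * L ^ 2 * epsVar n kstar < |σhatsq x - σ ^ 2| / σ ^ 2}
      ≤ μ (Aᶜ ∪ B) := measure_mono key
    _ ≤ μ Aᶜ + μ B := measure_union_le _ _
    _ ≤ ENNReal.ofReal η + ENNReal.ofReal δ := by
        gcongr
        · rw [measure_compl hAm (measure_ne_top _ _), measure_univ]
          have h1 := hpilot θ γ hγ σ hσ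
          calc 1 - μ A ≤ 1 - ENNReal.ofReal (1 - η) := by
                exact tsub_le_tsub_left h1 1
            _ = ENNReal.ofReal η := by
                rw [← ENNReal.ofReal_one,
                  ← ENNReal.ofReal_sub _ (by linarith [hη.2] : (0:ℝ) ≤ 1 - η)]
                norm_num
        · exact hσkrisk θ γ hγ σ hσ
    _ = ENNReal.ofReal (η + δ) := (ENNReal.ofReal_add hη.1.le hδ.1.le).symm
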